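/- Let 𝒜 be an abelian category in which every object is a finite biproduct of simple objects (𝒜 is semi-simple), and let i : 𝒜' → 𝒜 be a fully faithful exact functor from an abelian category 𝒜' whose essential image is a Serre subcategory of 𝒜. Then i admits an exact right adjoint; equivalently, for every A ∈ 𝒜 there exist X ∈ 𝒜' and a monomorphism m : iX → A such that Hom_𝒜(iY, coker m) = 0 and Hom_𝒜(coker m, iY) = 0 for all Y ∈ 𝒜'. -/

import Mathlib

open CategoryTheory Limits ZeroObject

section Aux

variable {A' : Type*} {A : Type*} [Category A'] [Category A]
  [Abelian A'] [Abelian A]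

/-- Any map from an object of the essential image to a simple object not in the
essential image vanishes. -/
lemma auxA (i : A' ⥤ A)
    (hSerre : ∀ (S : ShortComplex A), S.ShortExact →
        (i.essImage S.X₂ ↔ (i.essImage S.X₁ ∧ i.essImage S.X₃)))
    {S : A} [Simple S] (hS : ¬ i.essImage S) {Z : A'} (g : i.obj Z ⟶ S) : g = 0 := by
  by_contra hg
  haveI : IsIso (image.ι g) := isIso_of_mono_of_nonzero
    (fun h => hg (by rw [← image.fac g, h, comp_zero]))
  haveI : Epi g := by rw [← image.fac g]; exact epi_comp _ _
  exact hS (((hSerre (ShortComplex.mk (kernel.ι g) g (kernel.condition g))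
    { exact := ShortComplex.exact_of_f_is_kernel _ (kernelIsKernel g) }).mp
    (i.obj_mem_essImage Z)).2)

/-- Any map from a simple object not in the essential image to an object of the
essential image vanishes. -/
lemma auxB (i : A' ⥤ A)
    (hSerre : ∀ (S : ShortComplex A), S.ShortExact →
        (i.essImage S.X₂ ↔ (i.essImage S.X₁ ∧ i.essImage S.X₃)))
    {S : A} [Simple S] (hS : ¬ i.essImage S) {Z : A'} (g : S ⟶ i.obj Z) : g = 0 := by
  by_contra hg
  haveI : IsIso (factorThruImage g) := isIso_of_epi_of_nonzero
    (fun h => hg (by rw [← image.fac g, h, zero_comp]))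
  haveI : Mono g := by rw [← image.fac g]; exact mono_comp _ _
  exact hS (((hSerre (ShortComplex.mk g (cokernel.π g) (cokernel.condition g))
    { exact := ShortComplex.exact_of_g_is_cokernel _ (cokernelIsCokernel g) }).mp
    (i.obj_mem_essImage Z)).1)

lemma auxKey [HasFiniteBiproducts A]
    (i : A' ⥤ A) [i.Full] [i.Faithful]
    [PreservesFiniteLimits i]
    (hSerre : ∀ (S : ShortComplex A), S.ShortExact →
        (i.essImage S.X₂ ↔ (i.essImage S.X₁ ∧ i.essImage S.X₃)))
    (X : A) {n : ℕ} (f : Fin n → A) (hsim : ∀ j, Simple (f j)) (e : X ≅ ⨁ f) :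
    ∃ (Y : A') (m : i.obj Y ⟶ X) (r : X ⟶ i.obj Y), m ≫ r = 𝟙 _ ∧
      (∀ (Z : A') (g : i.obj Z ⟶ cokernel m), g = 0) ∧
      (∀ (Z : A') (g : cokernel m ⟶ i.obj Z), g = 0) := by
  classical
  haveI : i.PreservesZeroMorphisms :=
    Functor.preservesZeroMorphisms_of_map_zero_object
      ((IsTerminal.isTerminalObj i 0 HasZeroObject.zeroIsTerminal).isZero.isoZero)
  haveI : i.Additive := Functor.additive_of_preserves_binary_products i
  haveI : HasFiniteBiproducts A' := Abelian.hasFiniteBiproducts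
  set p : Set (Fin n) := {j | i.essImage (f j)} with hp
  haveI : Fintype ↥p := Fintype.ofFinite _
  haveI : Finite (Subtype p) := Subtype.finite
  haveI : Finite (Subtype pᶜ) := Subtype.finite
  have hmem : ∀ j : ↥p, i.essImage (f j.1) := fun j => j.2
  let g : ↥p → A' := fun j => Functor.essImage.witness (hmem j)
  let isoj : ∀ j : ↥p, i.obj (g j) ≅ Subtype.restrict p f j :=
    fun j => Functor.essImage.getIso (hmem j)
  let φ : i.obj (⨁ g) ≅ ⨁ (Subtype.restrict p f) :=
    i.mapBiproduct g ≪≫ biproduct.mapIso isoj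
  refine ⟨⨁ g, φ.hom ≫ (biproduct.fromSubtype f p ≫ e.inv),
    e.hom ≫ (biproduct.toSubtype f p ≫ φ.inv), ?_, ?_, ?_⟩
  · simp only [Category.assoc, Iso.inv_hom_id_assoc]
    slice_lhs 2 3 => erw [biproduct.fromSubtype_toSubtype]
    simp
  · intro Z q
    haveI : Epi φ.hom := inferInstance
    let c : cokernel (φ.hom ≫ (biproduct.fromSubtype f p ≫ e.inv)) ≅
        ⨁ Subtype.restrict pᶜ f :=
      cokernelEpiComp φ.hom (biproduct.fromSubtype f p ≫ e.inv) ≪≫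
        cokernelCompIsIso (biproduct.fromSubtype f p) e.inv ≪≫
        cokernelBiproductFromSubtypeIso f p
    have hq : q ≫ c.hom = 0 := by
      apply biproduct.hom_ext
      intro j
      haveI := hsim j.1
      rw [Category.assoc, zero_comp]
      exact auxA i hSerre (j.2 : ¬ i.essImage (f j.1)) _
    calc q = (q ≫ c.hom) ≫ c.inv := by simp
    _ = 0 := by rw [hq, zero_comp]
  · intro Z q
    haveI : Epi φ.hom := inferInstance
    let c : cokernel (φ.hom ≫ (biproduct.fromSubtype f p ≫ e.inv)) ≅
        ⨁ Subtype.restrict pᶜ f :=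
      cokernelEpiComp φ.hom (biproduct.fromSubtype f p ≫ e.inv) ≪≫
        cokernelCompIsIso (biproduct.fromSubtype f p) e.inv ≪≫
        cokernelBiproductFromSubtypeIso f p
    have hq : c.inv ≫ q = 0 := by
      apply biproduct.hom_ext'
      intro j
      haveI := hsim j.1
      rw [comp_zero]
      exact auxB i hSerre (j.2 : ¬ i.essImage (f j.1)) _
    calc q = c.hom ≫ (c.inv ≫ q) := by simp
    _ = 0 := by rw [hq, comp_zero]

variable (i : A' ⥤ A) [i.Full] [i.Faithful]
  (Y : A → A') (m : ∀ X, i.obj (Y X) ⟶ X) (r : ∀ X, X ⟶ i.obj (Y X))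
  (hmr : ∀ X, m X ≫ r X = 𝟙 _)
  (fa : ∀ (X : A) (Z : A') (g : i.obj Z ⟶ X), g ≫ r X ≫ m X = g)
  (fb : ∀ (X : A) (Z : A') (g : X ⟶ i.obj Z), r X ≫ m X ≫ g = g)

/-- The candidate adjoint functor. -/
@[reducible]
noncomputable def auxP : A ⥤ A' where
  obj := Y
  map {X X'} f := i.preimage (m X ≫ f ≫ r X')
  map_id X := i.map_injective (by simp [hmr X])
  map_comp {X X' X''} f h := i.map_injective (by
    simp only [Functor.map_comp, Functor.map_preimage, Category.assoc]
    rw [fb X' (Y X'') (h ≫ r X'')])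

/-- `i ⊣ auxP`. -/
noncomputable def auxAdj1 : i ⊣ auxP i Y m r hmr fb :=
  Adjunction.mkOfHomEquiv
    { homEquiv := fun Z X =>
        { toFun := fun g => i.preimage (g ≫ r X)
          invFun := fun h => i.map h ≫ m X
          left_inv := fun g => by
            show i.map (i.preimage (g ≫ r X)) ≫ m X = g
            rw [Functor.map_preimage, Category.assoc, fa X Z g]
          right_inv := fun h => i.map_injective (by
            show i.map (i.preimage ((i.map h ≫ m X) ≫ r X)) = i.map h
            rw [Functor.map_preimage, Category.assoc, hmr X]
            exact Category.comp_id _) }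
      homEquiv_naturality_left_symm := fun f h => by simp
      homEquiv_naturality_right := fun {Z X X'} g f => i.map_injective (by
        simp only [Equiv.coe_fn_mk, Functor.map_comp, Functor.map_preimage, auxP,
          Category.assoc]
        conv_lhs => rw [← fa X Z g]
        simp) }

/-- `auxP ⊣ i`. -/
noncomputable def auxAdj2 : auxP i Y m r hmr fb ⊣ i :=
  Adjunction.mkOfHomEquiv
    { homEquiv := fun X Z =>
        { toFun := fun h => r X ≫ i.map h
          invFun := fun g => i.preimage (m X ≫ g)
          left_inv := fun h => i.map_injective (by
            show i.map (i.preimage (m X ≫ r X ≫ i.map h)) = i.map h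
            rw [Functor.map_preimage, ← Category.assoc, hmr X, Category.id_comp])
          right_inv := fun g => by
            show r X ≫ i.map (i.preimage (m X ≫ g)) = g
            rw [Functor.map_preimage, fb X Z g] }
      homEquiv_naturality_left_symm := fun {X X' Z} f g => i.map_injective (by
        simp only [Equiv.coe_fn_symm_mk, Equiv.coe_fn_mk, Functor.map_comp,
          Functor.map_preimage, auxP, Category.assoc]
        rw [fb X' Z g])
      homEquiv_naturality_right := fun {X Z Z'} g f => by
        simp }

end Aux

/-- Proposition D.1.9 (3): if `𝒜` is semi-simple (every object is a finite biproduct of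
simple objects) and `i : 𝒜' ⥤ 𝒜` is fully faithful exact with Serre essential image, then
`i` admits an exact right adjoint; equivalently every `A` receives a monomorphism `m` from
an object of the image with `Hom(i Y, coker m) = 0 = Hom(coker m, i Y)` for all `Y`. -/
theorem stmt_14 {A' : Type*} {A : Type*} [Category A'] [Category A]
    [Abelian A'] [Abelian A] [Limits.HasFiniteBiproducts A]
    (hss : ∀ X : A, ∃ (n : ℕ) (f : Fin n → A),
        (∀ j, Simple (f j)) ∧ Nonempty (X ≅ ⨁ f))
    (i : A' ⥤ A) [i.Full] [i.Faithful]
    [PreservesFiniteLimits i] [PreservesFiniteColimits i]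
    (hSerre : ∀ (S : ShortComplex A), S.ShortExact →
        (i.essImage S.X₂ ↔ (i.essImage S.X₁ ∧ i.essImage S.X₃))) :
    (∃ p : A ⥤ A', Nonempty (i ⊣ p) ∧
        Nonempty (PreservesFiniteLimits p) ∧ Nonempty (PreservesFiniteColimits p)) ∧
    (∀ X : A, ∃ (Y : A') (m : i.obj Y ⟶ X), Mono m ∧
        (∀ (Z : A') (g : i.obj Z ⟶ cokernel m), g = 0) ∧
        (∀ (Z : A') (g : cokernel m ⟶ i.obj Z), g = 0)) := by
  classical
  have key : ∀ X : A, ∃ (Y : A') (m : i.obj Y ⟶ X) (r : X ⟶ i.obj Y), m ≫ r = 𝟙 _ ∧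
      (∀ (Z : A') (g : i.obj Z ⟶ cokernel m), g = 0) ∧
      (∀ (Z : A') (g : cokernel m ⟶ i.obj Z), g = 0) := by
    intro X
    obtain ⟨n, f, hsim, ⟨e⟩⟩ := hss X
    exact auxKey i hSerre X f hsim e
  choose Y m r hmr h1 h2 using key
  -- every map from the essential image into `X` factors through `m X`
  have fa : ∀ (X : A) (Z : A') (g : i.obj Z ⟶ X), g ≫ r X ≫ m X = g := by
    intro X Z g
    have hcomp : m X ≫ (𝟙 X - r X ≫ m X) = 0 := by
      simp only [Preadditive.comp_sub, Category.comp_id, ← Category.assoc, hmr X,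
        Category.id_comp, sub_self]
    have ht : cokernel.π (m X) ≫ cokernel.desc (m X) (𝟙 X - r X ≫ m X) hcomp =
        𝟙 X - r X ≫ m X := cokernel.π_desc _ _ _
    have hz : g ≫ (𝟙 X - r X ≫ m X) = 0 := by
      rw [← ht, ← Category.assoc, h1 X Z (g ≫ cokernel.π (m X)), zero_comp]
    have h' : g - g ≫ r X ≫ m X = 0 := by
      simpa only [Preadditive.comp_sub, Category.comp_id, Category.assoc] using hz
    exact (sub_eq_zero.mp h').symm
  -- every map from `X` to the essential image factors through `r X`
  have fb : ∀ (X : A) (Z : A') (g : X ⟶ i.obj Z), r X ≫ m X ≫ g = g := by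
    intro X Z g
    have hcomp : m X ≫ (𝟙 X - r X ≫ m X) = 0 := by
      simp only [Preadditive.comp_sub, Category.comp_id, ← Category.assoc, hmr X,
        Category.id_comp, sub_self]
    have ht : cokernel.π (m X) ≫ cokernel.desc (m X) (𝟙 X - r X ≫ m X) hcomp =
        𝟙 X - r X ≫ m X := cokernel.π_desc _ _ _
    have hz : (𝟙 X - r X ≫ m X) ≫ g = 0 := by
      rw [← ht, Category.assoc,
        h2 X Z (cokernel.desc (m X) (𝟙 X - r X ≫ m X) hcomp ≫ g), comp_zero]
    have h' : g - r X ≫ m X ≫ g = 0 := by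
      simpa only [Preadditive.sub_comp, Category.id_comp, Category.assoc] using hz
    exact (sub_eq_zero.mp h').symm
  constructor
  · refine ⟨auxP i Y m r hmr fb, ⟨auxAdj1 i Y m r hmr fa fb⟩, ?_, ?_⟩
    · haveI : PreservesLimitsOfSize.{0, 0} (auxP i Y m r hmr fb) :=
        (auxAdj1 i Y m r hmr fa fb).rightAdjoint_preservesLimits
      exact ⟨PreservesLimitsOfSize.preservesFiniteLimits.{0, 0} _⟩
    · haveI : PreservesColimitsOfSize.{0, 0} (auxP i Y m r hmr fb) :=
        (auxAdj2 i Y m r hmr fb).leftAdjoint_preservesColimits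
      exact ⟨PreservesColimitsOfSize.preservesFiniteColimits.{0, 0} _⟩
  · intro X
    haveI : IsSplitMono (m X) := IsSplitMono.mk' ⟨r X, hmr X⟩
    exact ⟨Y X, m X, inferInstance, h1 X, h2 X⟩
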